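/- If A is a three-dimensional permutation array of size 2 × k × 2k with k odd and k ≥ 3, then some 2 × k × 2k window of the periodic extension of A has a repeated difference vector; in particular, A is not periodic Costas. -/
import Mathlib

section Helpers

lemma zmod_val_eq_int (n : ℕ) [NeZero n] (x : ZMod n) (B : ℤ)
    (h0 : 0 ≤ B) (h1 : B < n) (hc : (B : ZMod n) = x) : (x.val : ℤ) = B := by
  have h2 : ((x.val : ℤ) : ZMod n) = x := by
    push_cast
    exact ZMod.natCast_rightInverse x
  rw [← h2, ZMod.intCast_eq_intCast_iff'] at hc
  have hv : (0:ℤ) ≤ (x.val:ℤ) := by positivity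
  have hv2 : (x.val:ℤ) < n := by exact_mod_cast x.val_lt
  rw [Int.emod_eq_of_lt h0 h1, Int.emod_eq_of_lt hv hv2] at hc
  omega

lemma window_comp_build (n : ℕ) [NeZero n] (a₁ a₂ v r : ZMod n) (D : ℤ)
    (hD : (D : ZMod n) = v)
    (h1 : 0 ≤ ((a₁ - r).val : ℤ) + D) (h1' : ((a₁ - r).val : ℤ) + D < n)
    (h2 : 0 ≤ ((a₂ - r).val : ℤ) + D) (h2' : ((a₂ - r).val : ℤ) + D < n) :
    ∃ κ A₁ A₂ D' : ℤ, ((A₁ : ZMod n) = a₁) ∧ ((A₂ : ZMod n) = a₂) ∧ ((D' : ZMod n) = v) ∧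
      κ ≤ A₁ ∧ A₁ < κ + n ∧ κ ≤ A₁ + D' ∧ A₁ + D' < κ + n ∧
      κ ≤ A₂ ∧ A₂ < κ + n ∧ κ ≤ A₂ + D' ∧ A₂ + D' < κ + n := by
  refine ⟨(r.val : ℤ), (r.val : ℤ) + ((a₁ - r).val : ℤ),
    (r.val : ℤ) + ((a₂ - r).val : ℤ), D, ?_, ?_, hD, ?_, ?_, ?_, ?_, ?_, ?_, ?_, ?_⟩
  · push_cast
    rw [ZMod.natCast_rightInverse, ZMod.natCast_rightInverse]
    ring
  · push_cast
    rw [ZMod.natCast_rightInverse, ZMod.natCast_rightInverse]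
    ring
  · have : (0:ℤ) ≤ ((a₁ - r).val : ℤ) := by positivity
    omega
  · have : ((a₁ - r).val : ℤ) < n := by exact_mod_cast (a₁ - r).val_lt
    omega
  · omega
  · omega
  · have : (0:ℤ) ≤ ((a₂ - r).val : ℤ) := by positivity
    omega
  · have : ((a₂ - r).val : ℤ) < n := by exact_mod_cast (a₂ - r).val_lt
    omega
  · omega
  · omega

lemma window_comp (n : ℕ) [NeZero n] (a₁ a₂ v : ZMod n)
    (h : ¬(v ≠ 0 ∧ 2 * v = 0 ∧ a₁ - a₂ = v)) :
    ∃ κ A₁ A₂ D : ℤ, ((A₁ : ZMod n) = a₁) ∧ ((A₂ : ZMod n) = a₂) ∧ ((D : ZMod n) = v) ∧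
      κ ≤ A₁ ∧ A₁ < κ + n ∧ κ ≤ A₁ + D ∧ A₁ + D < κ + n ∧
      κ ≤ A₂ ∧ A₂ < κ + n ∧ κ ≤ A₂ + D ∧ A₂ + D < κ + n := by
  have hn : 0 < (n:ℤ) := by exact_mod_cast (NeZero.pos n)
  have hv0 : (0:ℤ) ≤ (v.val : ℤ) := by positivity
  have hvlt : ((v.val : ℕ) : ℤ) < n := by exact_mod_cast v.val_lt
  have hvcast : (((v.val : ℕ) : ℤ) : ZMod n) = v := by
    push_cast; exact ZMod.natCast_rightInverse v
  have hself : (a₁ - a₁) = (0 : ZMod n) := by ring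
  have hval0 : (((a₁ - a₁).val : ℕ) : ℤ) = 0 := by rw [hself]; simp
  have hval0' : (((a₂ - a₂).val : ℕ) : ℤ) = 0 := by rw [sub_self]; simp
  set d21 : ℤ := ((a₂ - a₁).val : ℤ) with hd21
  set d12 : ℤ := ((a₁ - a₂).val : ℤ) with hd12
  have hd21lt : d21 < n := by rw [hd21]; exact_mod_cast (a₂ - a₁).val_lt
  have hd12lt : d12 < n := by rw [hd12]; exact_mod_cast (a₁ - a₂).val_lt
  have hd21n : 0 ≤ d21 := by positivity
  have hd12n : 0 ≤ d12 := by positivity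
  by_cases c1 : d21 + (v.val : ℤ) < n
  · exact window_comp_build n a₁ a₂ v a₁ (v.val : ℤ) hvcast
      (by rw [hval0]; omega) (by rw [hval0]; omega) (by omega) (by omega)
  by_cases c2 : d12 + (v.val : ℤ) < n
  · exact window_comp_build n a₁ a₂ v a₂ (v.val : ℤ) hvcast
      (by omega) (by omega) (by rw [hval0']; omega) (by rw [hval0']; omega)
  have hvne : v ≠ 0 := by
    intro hv
    rw [hv] at c1
    simp [ZMod.val_zero] at c1
    omega
  by_cases c3 : d21 < (v.val : ℤ)
  · have hDcast : (((v.val : ℤ) - n : ℤ) : ZMod n) = v := by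
      push_cast
      rw [ZMod.natCast_rightInverse, ZMod.natCast_self]
      ring
    have ht1 : ((a₁ - (a₁ + v)).val : ℤ) = n - (v.val : ℤ) := by
      have : a₁ - (a₁ + v) = -v := by ring
      rw [this]
      have := ZMod.val_neg_of_ne_zero (a := v) (na := ⟨hvne⟩)
      rw [this]
      have : v.val ≤ n := le_of_lt v.val_lt
      omega
    have ht2 : ((a₂ - (a₁ + v)).val : ℤ) = d21 + n - (v.val : ℤ) := by
      apply zmod_val_eq_int
      · omega
      · omega
      · push_cast [hd21]
        rw [ZMod.natCast_rightInverse, ZMod.natCast_rightInverse, ZMod.natCast_self]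
        ring
    exact window_comp_build n a₁ a₂ v (a₁ + v) ((v.val : ℤ) - n) hDcast
      (by rw [ht1]; omega) (by rw [ht1]; omega) (by rw [ht2]; omega) (by rw [ht2]; omega)
  by_cases c4 : d12 < (v.val : ℤ)
  · have hDcast : (((v.val : ℤ) - n : ℤ) : ZMod n) = v := by
      push_cast
      rw [ZMod.natCast_rightInverse, ZMod.natCast_self]
      ring
    have ht2 : ((a₂ - (a₂ + v)).val : ℤ) = n - (v.val : ℤ) := by
      have : a₂ - (a₂ + v) = -v := by ring
      rw [this]
      have := ZMod.val_neg_of_ne_zero (a := v) (na := ⟨hvne⟩)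
      rw [this]
      have : v.val ≤ n := le_of_lt v.val_lt
      omega
    have ht1 : ((a₁ - (a₂ + v)).val : ℤ) = d12 + n - (v.val : ℤ) := by
      apply zmod_val_eq_int
      · omega
      · omega
      · push_cast [hd12]
        rw [ZMod.natCast_rightInverse, ZMod.natCast_rightInverse, ZMod.natCast_self]
        ring
    exact window_comp_build n a₁ a₂ v (a₂ + v) ((v.val : ℤ) - n) hDcast
      (by rw [ht1]; omega) (by rw [ht1]; omega) (by rw [ht2]; omega) (by rw [ht2]; omega)
  exfalso
  apply h
  have hane : a₂ - a₁ ≠ 0 := by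
    intro h0
    rw [h0] at hd21
    simp [ZMod.val_zero] at hd21
    omega
  have hd12eq : d12 = n - d21 := by
    have : a₁ - a₂ = -(a₂ - a₁) := by ring
    rw [hd12, this]
    have := ZMod.val_neg_of_ne_zero (a := a₂ - a₁) (na := ⟨hane⟩)
    rw [this]
    have : (a₂ - a₁).val ≤ n := le_of_lt (a₂ - a₁).val_lt
    push_cast [hd21]
    omega
  have hveq : (v.val : ℤ) = d21 := by omega
  have h2v : 2 * (v.val : ℤ) = n := by omega
  have h2v' : 2 * v = 0 := by
    have : ((2 * (v.val : ℤ) : ℤ) : ZMod n) = 2 * v := by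
      push_cast
      rw [ZMod.natCast_rightInverse]
    rw [← this, h2v]
    push_cast
    exact ZMod.natCast_self n
  refine ⟨hvne, h2v', ?_⟩
  have hv21 : v = a₂ - a₁ := by
    have : (((a₂ - a₁).val : ℤ) : ZMod n) = a₂ - a₁ := by
      push_cast; exact ZMod.natCast_rightInverse _
    rw [← this, ← hd21, ← hveq]
    push_cast
    exact (ZMod.natCast_rightInverse v).symm
  have : a₁ - a₂ = -v := by rw [hv21]; ring
  rw [this]
  linear_combination -h2v'

def ff (k : ℕ) [NeZero k] [NeZero (2 * k)] (φ : Fin 2 × Fin k ≃ Fin (2 * k))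
    (p : ZMod 2 × ZMod k) : ZMod (2 * k) :=
  ((φ (⟨p.1.val, p.1.val_lt⟩, ⟨p.2.val, p.2.val_lt⟩) : ℕ) : ZMod (2 * k))

lemma ff_inj (k : ℕ) [NeZero k] [NeZero (2 * k)] (φ : Fin 2 × Fin k ≃ Fin (2 * k)) :
    Function.Injective (ff k φ) := by
  intro p q hpq
  unfold ff at hpq
  have h1 : (φ (⟨p.1.val, p.1.val_lt⟩, ⟨p.2.val, p.2.val_lt⟩) : ℕ)
      = (φ (⟨q.1.val, q.1.val_lt⟩, ⟨q.2.val, q.2.val_lt⟩) : ℕ) := by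
    have := congrArg ZMod.val hpq
    rwa [ZMod.val_cast_of_lt (Fin.is_lt _), ZMod.val_cast_of_lt (Fin.is_lt _)] at this
  have h2 := φ.injective (Fin.val_injective h1)
  rw [Prod.mk.injEq, Fin.mk.injEq, Fin.mk.injEq] at h2
  exact Prod.ext (ZMod.val_injective 2 h2.1) (ZMod.val_injective k h2.2)

lemma sum_zmod (k : ℕ) [NeZero (2 * k)] :
    ∑ z : ZMod (2 * k), z = ((k * (2 * k - 1) : ℕ) : ZMod (2 * k)) := by
  have h1 : ∑ z : ZMod (2 * k), z = ∑ i ∈ Finset.range (2 * k), ((i : ℕ) : ZMod (2 * k)) := by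
    symm
    apply Finset.sum_bij (fun (i : ℕ) _ => ((i : ℕ) : ZMod (2 * k)))
    · intro a _; exact Finset.mem_univ _
    · intro a ha b hb hab
      have := congrArg ZMod.val hab
      rwa [ZMod.val_cast_of_lt (Finset.mem_range.mp ha),
        ZMod.val_cast_of_lt (Finset.mem_range.mp hb)] at this
    · intro z _
      exact ⟨z.val, Finset.mem_range.mpr z.val_lt, ZMod.natCast_rightInverse z⟩
    · intro a _; rfl
  rw [h1, ← Nat.cast_sum]
  congr 1
  have := Finset.sum_range_id_mul_two (2 * k)
  have h2 : (k * (2 * k - 1)) * 2 = (2 * k) * (2 * k - 1) := by ring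
  omega

lemma sum_zmod_ne (k : ℕ) (hk3 : 3 ≤ k) [NeZero (2 * k)] :
    ∑ z : ZMod (2 * k), z ≠ 0 := by
  rw [sum_zmod k]
  obtain ⟨m, rfl⟩ : ∃ m, k = m + 1 := ⟨k - 1, by omega⟩
  have heq : ((m + 1) * (2 * (m + 1) - 1) : ℕ) = (2 * (m + 1)) * m + (m + 1) := by
    have h1 : 2 * (m + 1) - 1 = 2 * m + 1 := by omega
    rw [h1]; ring
  rw [heq, Nat.cast_add, Nat.cast_mul, ZMod.natCast_self, zero_mul, zero_add]
  intro h
  have h2 := (ZMod.natCast_eq_zero_iff (m + 1) (2 * (m + 1))).mp h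
  have := Nat.le_of_dvd (by omega) h2
  omega

lemma exists_collision (k : ℕ) (hk3 : 3 ≤ k) [NeZero k] [NeZero (2 * k)]
    (φ : Fin 2 × Fin k ≃ Fin (2 * k)) :
    ∃ p₁ p₂ : ZMod 2 × ZMod k, p₁ ≠ p₂ ∧
      ff k φ (p₁ + ((0 : ZMod 2), (1 : ZMod k))) - ff k φ p₁
        = ff k φ (p₂ + ((0 : ZMod 2), (1 : ZMod k))) - ff k φ p₂ := by
  set s : ZMod 2 × ZMod k := ((0 : ZMod 2), (1 : ZMod k)) with hs
  set g : ZMod 2 × ZMod k → ZMod (2 * k) := fun p => ff k φ (p + s) - ff k φ p with hg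
  by_contra hcon
  push_neg at hcon
  have hginj : Function.Injective g := by
    intro p q h
    by_contra hne
    exact hcon p q hne h
  have hcard : Fintype.card (ZMod 2 × ZMod k) = Fintype.card (ZMod (2 * k)) := by
    rw [Fintype.card_prod, ZMod.card, ZMod.card, ZMod.card]
  have hbij : Function.Bijective g :=
    (Fintype.bijective_iff_injective_and_card g).mpr ⟨hginj, hcard⟩
  have hsum1 : ∑ p : ZMod 2 × ZMod k, g p = ∑ z : ZMod (2 * k), z := by
    have := Function.Bijective.sum_comp hbij (id : ZMod (2 * k) → ZMod (2 * k))
    simpa using this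
  have hsum2 : ∑ p : ZMod 2 × ZMod k, g p = 0 := by
    rw [hg]
    rw [Finset.sum_sub_distrib]
    have := Equiv.sum_comp (Equiv.addRight s) (ff k φ)
    rw [sub_eq_zero]
    exact this
  exact sum_zmod_ne k hk3 (hsum1 ▸ hsum2)

end Helpers

/-- `α ∈ ℤ³` is a dot of the periodic extension of the three-dimensional permutation
array of size `n₁ × n₂ × n₁n₂` defined by `φ`. -/
def IsExtDot3 (n₁ n₂ : ℕ) (φ : Fin n₁ × Fin n₂ ≃ Fin (n₁ * n₂)) (α : ℤ × ℤ × ℤ) : Prop :=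
  ∃ p : Fin n₁ × Fin n₂,
    (α.1 : ZMod n₁) = ((p.1 : ℕ) : ZMod n₁) ∧
    (α.2.1 : ZMod n₂) = ((p.2 : ℕ) : ZMod n₂) ∧
    (α.2.2 : ZMod (n₁ * n₂)) = ((φ p : ℕ) : ZMod (n₁ * n₂))

/-- `α` lies in the `n₁ × n₂ × n₁n₂` window based at `κ`. -/
def InWindow3 (n₁ n₂ : ℕ) (κ α : ℤ × ℤ × ℤ) : Prop :=
  κ.1 ≤ α.1 ∧ α.1 < κ.1 + (n₁ : ℤ) ∧
  κ.2.1 ≤ α.2.1 ∧ α.2.1 < κ.2.1 + (n₂ : ℤ) ∧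
  κ.2.2 ≤ α.2.2 ∧ α.2.2 < κ.2.2 + ((n₁ * n₂ : ℕ) : ℤ)

lemma isExtDot_of (k : ℕ) [NeZero k] [NeZero (2 * k)] (φ : Fin 2 × Fin k ≃ Fin (2 * k))
    (A B C : ℤ) (q : ZMod 2 × ZMod k)
    (hA : (A : ZMod 2) = q.1) (hB : (B : ZMod k) = q.2)
    (hC : (C : ZMod (2 * k)) = ff k φ q) :
    IsExtDot3 2 k φ (A, B, C) := by
  refine ⟨(⟨q.1.val, q.1.val_lt⟩, ⟨q.2.val, q.2.val_lt⟩), ?_, ?_, ?_⟩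
  · rw [hA]; exact (ZMod.natCast_rightInverse q.1).symm
  · rw [hB]; exact (ZMod.natCast_rightInverse q.2).symm
  · rw [hC]; rfl

/-- If `A` is a three-dimensional permutation array of size
`2 × k × 2k` with `k` odd and `k ≥ 3`, then some `2 × k × 2k` window of the periodic
extension of `A` has a repeated difference vector; in particular, `A` is not
periodic Costas. -/
theorem two_by_odd_repeated_difference (k : ℕ) (hk : Odd k) (hk3 : 3 ≤ k)
    (φ : Fin 2 × Fin k ≃ Fin (2 * k)) :
    ∃ κ α₁ ω₁ α₂ ω₂ : ℤ × ℤ × ℤ,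
      InWindow3 2 k κ α₁ ∧ InWindow3 2 k κ ω₁ ∧
      InWindow3 2 k κ α₂ ∧ InWindow3 2 k κ ω₂ ∧
      IsExtDot3 2 k φ α₁ ∧ IsExtDot3 2 k φ ω₁ ∧
      IsExtDot3 2 k φ α₂ ∧ IsExtDot3 2 k φ ω₂ ∧
      α₁ ≠ ω₁ ∧ α₂ ≠ ω₂ ∧ (α₁, ω₁) ≠ (α₂, ω₂) ∧
      ω₁ - α₁ = ω₂ - α₂ := by
  haveI : NeZero k := ⟨by omega⟩
  haveI : NeZero (2 * k) := ⟨by omega⟩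
  obtain ⟨p₁, p₂, hne, hcol⟩ := exists_collision k hk3 φ
  set s : ZMod 2 × ZMod k := ((0 : ZMod 2), (1 : ZMod k)) with hs
  set c : ZMod (2 * k) := ff k φ (p₁ + s) - ff k φ p₁ with hc
  have hc₁ : ff k φ (p₁ + s) - ff k φ p₁ = c := rfl
  have hc₂ : ff k φ (p₂ + s) - ff k φ p₂ = c := hcol.symm
  have hk2 : ¬ ((2 : ZMod k) = 0) := by
    intro h
    have h2 := (ZMod.natCast_eq_zero_iff 2 k).mp (by exact_mod_cast h)
    have := Nat.le_of_dvd (by omega) h2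
    omega
  have hbad : ¬(c ≠ 0 ∧ 2 * c = 0 ∧ ff k φ p₁ - ff k φ p₂ = c) := by
    rintro ⟨hc0, h2c, hfd⟩
    have e1 : ff k φ (p₂ + s) = ff k φ p₁ := by linear_combination hc₂ - hfd
    have e2 : ff k φ (p₁ + s) = ff k φ p₂ := by linear_combination hc₁ + hfd + h2c
    have hp21 : p₂ + s = p₁ := ff_inj k φ e1
    have hp12 : p₁ + s = p₂ := ff_inj k φ e2
    have hss : p₁ + s + s = p₁ := by rw [hp12, hp21]
    have hsnd : p₁.2 + 1 + 1 = p₁.2 := by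
      have := congrArg Prod.snd hss
      simpa [hs] using this
    exact hk2 (by linear_combination hsnd)
  have hx : ¬((0 : ZMod 2) ≠ 0 ∧ 2 * (0 : ZMod 2) = 0 ∧ p₁.1 - p₂.1 = 0) := by simp
  have hy : ¬((1 : ZMod k) ≠ 0 ∧ 2 * (1 : ZMod k) = 0 ∧ p₁.2 - p₂.2 = 1) := by
    rintro ⟨_, h2, _⟩
    rw [mul_one] at h2
    exact hk2 h2
  obtain ⟨κx, X₁, X₂, Dx, hX₁, hX₂, hDx, hb₁, hb₂, hb₃, hb₄, hb₅, hb₆, hb₇, hb₈⟩ :=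
    window_comp 2 p₁.1 p₂.1 0 hx
  obtain ⟨κy, Y₁, Y₂, Dy, hY₁, hY₂, hDy, hy₁, hy₂, hy₃, hy₄, hy₅, hy₆, hy₇, hy₈⟩ :=
    window_comp k p₁.2 p₂.2 1 hy
  obtain ⟨κz, Z₁, Z₂, Dz, hZ₁, hZ₂, hDz, hz₁, hz₂, hz₃, hz₄, hz₅, hz₆, hz₇, hz₈⟩ :=
    window_comp (2 * k) (ff k φ p₁) (ff k φ p₂) c hbad
  refine ⟨(κx, κy, κz), (X₁, Y₁, Z₁), (X₁ + Dx, Y₁ + Dy, Z₁ + Dz),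
    (X₂, Y₂, Z₂), (X₂ + Dx, Y₂ + Dy, Z₂ + Dz), ?_, ?_, ?_, ?_, ?_, ?_, ?_, ?_, ?_, ?_, ?_, ?_⟩
  · exact ⟨hb₁, hb₂, hy₁, hy₂, hz₁, hz₂⟩
  · exact ⟨hb₃, hb₄, hy₃, hy₄, hz₃, hz₄⟩
  · exact ⟨hb₅, hb₆, hy₅, hy₆, hz₅, hz₆⟩
  · exact ⟨hb₇, hb₈, hy₇, hy₈, hz₇, hz₈⟩
  · exact isExtDot_of k φ X₁ Y₁ Z₁ p₁ hX₁ hY₁ hZ₁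
  · refine isExtDot_of k φ (X₁ + Dx) (Y₁ + Dy) (Z₁ + Dz) (p₁ + s) ?_ ?_ ?_
    · push_cast
      rw [hX₁, hDx]
      simp [hs]
    · push_cast
      rw [hY₁, hDy]
      simp [hs]
    · push_cast
      rw [hZ₁, hDz]
      linear_combination hc₁
  · exact isExtDot_of k φ X₂ Y₂ Z₂ p₂ hX₂ hY₂ hZ₂
  · refine isExtDot_of k φ (X₂ + Dx) (Y₂ + Dy) (Z₂ + Dz) (p₂ + s) ?_ ?_ ?_
    · push_cast
      rw [hX₂, hDx]
      simp [hs]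
    · push_cast
      rw [hY₂, hDy]
      simp [hs]
    · push_cast
      rw [hZ₂, hDz]
      linear_combination -hc₂
  · intro h
    have h2 : Y₁ = Y₁ + Dy := congrArg (fun a => a.2.1) h
    have hDy0 : Dy = 0 := by omega
    rw [hDy0] at hDy
    have : (1 : ZMod k) = 0 := by exact_mod_cast hDy.symm
    exact hk2 (by linear_combination 2 * this)
  · intro h
    have h2 : Y₂ = Y₂ + Dy := congrArg (fun a => a.2.1) h
    have hDy0 : Dy = 0 := by omega
    rw [hDy0] at hDy
    have : (1 : ZMod k) = 0 := by exact_mod_cast hDy.symm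
    exact hk2 (by linear_combination 2 * this)
  · intro h
    have hα : ((X₁ : ℤ), (Y₁ : ℤ), (Z₁ : ℤ)) = ((X₂ : ℤ), (Y₂ : ℤ), (Z₂ : ℤ)) :=
      congrArg Prod.fst h
    have hXe : X₁ = X₂ := congrArg (fun a => a.1) hα
    have hYe : Y₁ = Y₂ := congrArg (fun a => a.2.1) hα
    apply hne
    have e1 : p₁.1 = p₂.1 := by rw [← hX₁, ← hX₂, hXe]
    have e2 : p₁.2 = p₂.2 := by rw [← hY₁, ← hY₂, hYe]
    exact Prod.ext e1 e2
  · simp [Prod.mk_sub_mk]
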